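/- For every integer n ≥ 2 and every real number x, 𝔠_n(x) = 2x²·𝔠_{n−2}(x) + (x/4 + 4x³)·𝔠'_{n−2}(x) + (x²/4 + x⁴)·𝔠''_{n−2}(x), where 𝔠'_{m} and 𝔠''_{m} denote the first and second derivatives of the polynomial function x ↦ 𝔠_m(x). -/

import Mathlib

open Nat Finset

/-- Central factorial numbers of the second kind. -/
noncomputable def centralT (n k : ℕ) : ℝ :=
  (1 / (k ! : ℝ)) * ∑ j ∈ Finset.range (k + 1),
    (-1 : ℝ) ^ j * (k.choose j : ℝ) * ((k : ℝ) / 2 - (j : ℝ)) ^ n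

/-- Central Fubini-like polynomials. -/
noncomputable def centralFubini (n : ℕ) (x : ℝ) : ℝ :=
  ∑ k ∈ Finset.range (n + 1), (k ! : ℝ) * centralT n k * x ^ k


lemma hchoose (k i : ℕ) :
    (((k+2).choose (i+1) : ℕ) : ℝ) * ((i:ℝ)+1) = ((k:ℝ)+2) * (((k+1).choose i : ℕ) : ℝ) := by
  have h := Nat.add_one_mul_choose_eq (k+1) i
  exact_mod_cast h.symm

lemma sumA (f : ℝ → ℝ) (k : ℕ) :
    ∑ j ∈ Finset.range (k+3), (j:ℝ) * ((-1:ℝ)^j * (((k+2).choose j : ℕ):ℝ) * f (((k:ℝ)+2)/2 - j))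
      = -((k:ℝ)+2) * ∑ i ∈ Finset.range (k+2),
          (-1:ℝ)^i * (((k+1).choose i : ℕ):ℝ) * f ((k:ℝ)/2 - i) := by
  rw [Finset.sum_range_succ', Finset.mul_sum]
  simp only [Nat.cast_zero, zero_mul, add_zero]
  refine Finset.sum_congr rfl ?_
  intro i hi
  have hc := hchoose k i
  have harg : ((k:ℝ)+2)/2 - ((i:ℝ)+1) = (k:ℝ)/2 - (i:ℝ) := by ring
  push_cast
  rw [harg]
  linear_combination ((-1:ℝ)^(i+1) * f ((k:ℝ)/2 - (i:ℝ))) * hc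

lemma hchoose2 (k l : ℕ) :
    (((k+1).choose (l+1) : ℕ) : ℝ) * ((l:ℝ)+1) = ((k:ℝ)+1) * (((k).choose l : ℕ) : ℝ) := by
  have h := Nat.add_one_mul_choose_eq k l
  exact_mod_cast h.symm

lemma sumC (f : ℝ → ℝ) (k : ℕ) :
    ∑ i ∈ Finset.range (k+2), (i:ℝ) * ((-1:ℝ)^i * (((k+1).choose i : ℕ):ℝ) * f ((k:ℝ)/2 - i))
      = -((k:ℝ)+1) * ∑ l ∈ Finset.range (k+1),
          (-1:ℝ)^l * ((k.choose l : ℕ):ℝ) * f ((k:ℝ)/2 - 1 - l) := by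
  rw [Finset.sum_range_succ', Finset.mul_sum]
  simp only [Nat.cast_zero, zero_mul, add_zero]
  refine Finset.sum_congr rfl ?_
  intro l hl
  have hc := hchoose2 k l
  have harg : (k:ℝ)/2 - ((l:ℝ)+1) = (k:ℝ)/2 - 1 - (l:ℝ) := by ring
  push_cast
  rw [harg]
  linear_combination ((-1:ℝ)^(l+1) * f ((k:ℝ)/2 - 1 - (l:ℝ))) * hc

lemma sumB (f : ℝ → ℝ) (k : ℕ) :
    ∑ j ∈ Finset.range (k+3), (j:ℝ)^2 * ((-1:ℝ)^j * (((k+2).choose j : ℕ):ℝ) * f (((k:ℝ)+2)/2 - j))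
      = ((k:ℝ)+2)*((k:ℝ)+1) * (∑ l ∈ Finset.range (k+1),
            (-1:ℝ)^l * ((k.choose l : ℕ):ℝ) * f ((k:ℝ)/2 - 1 - l))
        - ((k:ℝ)+2) * ∑ i ∈ Finset.range (k+2),
            (-1:ℝ)^i * (((k+1).choose i : ℕ):ℝ) * f ((k:ℝ)/2 - i) := by
  have step1 : ∑ j ∈ Finset.range (k+3),
      (j:ℝ)^2 * ((-1:ℝ)^j * (((k+2).choose j : ℕ):ℝ) * f (((k:ℝ)+2)/2 - j))
      = -((k:ℝ)+2) * ∑ i ∈ Finset.range (k+2),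
          ((i:ℝ)+1) * ((-1:ℝ)^i * (((k+1).choose i : ℕ):ℝ) * f ((k:ℝ)/2 - i)) := by
    rw [Finset.sum_range_succ', Finset.mul_sum]
    simp only [Nat.cast_zero, zero_mul, add_zero, ne_eq, OfNat.ofNat_ne_zero,
      not_false_eq_true, zero_pow]
    refine Finset.sum_congr rfl ?_
    intro i hi
    have hc := hchoose k i
    have harg : ((k:ℝ)+2)/2 - ((i:ℝ)+1) = (k:ℝ)/2 - (i:ℝ) := by ring
    push_cast
    rw [harg]
    linear_combination (((i:ℝ)+1) * (-1:ℝ)^(i+1) * f ((k:ℝ)/2 - (i:ℝ))) * hc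
  have step2 : ∑ i ∈ Finset.range (k+2),
      ((i:ℝ)+1) * ((-1:ℝ)^i * (((k+1).choose i : ℕ):ℝ) * f ((k:ℝ)/2 - i))
      = (∑ i ∈ Finset.range (k+2), (i:ℝ) * ((-1:ℝ)^i * (((k+1).choose i : ℕ):ℝ) * f ((k:ℝ)/2 - i)))
        + ∑ i ∈ Finset.range (k+2), (-1:ℝ)^i * (((k+1).choose i : ℕ):ℝ) * f ((k:ℝ)/2 - i) := by
    rw [← Finset.sum_add_distrib]
    exact Finset.sum_congr rfl (fun i _ => by ring)
  rw [step1, step2, sumC]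
  ring

noncomputable def Sf (f : ℝ → ℝ) (k : ℕ) : ℝ :=
  ∑ j ∈ Finset.range (k + 1), (-1 : ℝ) ^ j * (k.choose j : ℝ) * f ((k : ℝ) / 2 - (j : ℝ))

lemma pascalP (f : ℝ → ℝ) (k : ℕ) :
    ∑ i ∈ Finset.range (k+2), (-1:ℝ)^i * (((k+1).choose i : ℕ):ℝ) * f ((k:ℝ)/2 - i)
      = Sf f k - ∑ l ∈ Finset.range (k+1),
          (-1:ℝ)^l * ((k.choose l : ℕ):ℝ) * f ((k:ℝ)/2 - 1 - l) := by
  have hR : ∀ i : ℕ, (-1:ℝ)^(i+1) * (((k+1).choose (i+1) : ℕ):ℝ) * f ((k:ℝ)/2 - ((i:ℝ)+1))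
      = -((-1:ℝ)^i * ((k.choose i : ℕ):ℝ) * f ((k:ℝ)/2 - 1 - i))
        - ((-1:ℝ)^i * ((k.choose (i+1) : ℕ):ℝ) * f ((k:ℝ)/2 - 1 - i)) := by
    intro i
    have harg : (k:ℝ)/2 - ((i:ℝ)+1) = (k:ℝ)/2 - 1 - (i:ℝ) := by ring
    rw [harg, Nat.choose_succ_succ]
    push_cast
    ring
  rw [Finset.sum_range_succ']
  have h1 : ∑ i ∈ Finset.range (k+1),
      (-1:ℝ)^(i+1) * (((k+1).choose (i+1) : ℕ):ℝ) * f ((k:ℝ)/2 - (((i:ℕ)+1:ℕ):ℝ))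
      = -(∑ l ∈ Finset.range (k+1), (-1:ℝ)^l * ((k.choose l : ℕ):ℝ) * f ((k:ℝ)/2 - 1 - l))
        - ∑ i ∈ Finset.range (k+1), (-1:ℝ)^i * ((k.choose (i+1) : ℕ):ℝ) * f ((k:ℝ)/2 - 1 - i) := by
    rw [← Finset.sum_neg_distrib, ← Finset.sum_sub_distrib]
    refine Finset.sum_congr rfl ?_
    intro i _
    push_cast
    rw [show ((k:ℝ)/2 - ((i:ℝ)+1)) = (k:ℝ)/2 - ((i:ℝ)+1) from rfl]
    have := hR i
    push_cast at this
    linarith [this]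
  have h0 : (-1:ℝ)^0 * (((k+1).choose 0 : ℕ):ℝ) * f ((k:ℝ)/2 - ((0:ℕ):ℝ)) = f ((k:ℝ)/2) := by
    simp
  have h2 : Sf f k = f ((k:ℝ)/2)
      - ∑ i ∈ Finset.range k, (-1:ℝ)^i * ((k.choose (i+1) : ℕ):ℝ) * f ((k:ℝ)/2 - 1 - i) := by
    unfold Sf
    rw [Finset.sum_range_succ']
    have hh : ∑ i ∈ Finset.range k,
        (-1:ℝ)^(i+1) * ((k.choose (i+1) : ℕ):ℝ) * f ((k:ℝ)/2 - (((i:ℕ)+1:ℕ):ℝ))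
        = -(∑ i ∈ Finset.range k, (-1:ℝ)^i * ((k.choose (i+1) : ℕ):ℝ) * f ((k:ℝ)/2 - 1 - i)) := by
      rw [← Finset.sum_neg_distrib]
      refine Finset.sum_congr rfl ?_
      intro i _
      have harg : (k:ℝ)/2 - (((i:ℕ)+1:ℕ):ℝ) = (k:ℝ)/2 - 1 - (i:ℝ) := by push_cast; ring
      rw [harg]
      ring
    rw [hh]
    simp only [pow_zero, Nat.choose_zero_right, Nat.cast_one, one_mul, Nat.cast_zero, sub_zero]
    ring
  have h3 : ∑ i ∈ Finset.range (k+1), (-1:ℝ)^i * ((k.choose (i+1) : ℕ):ℝ) * f ((k:ℝ)/2 - 1 - i)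
      = ∑ i ∈ Finset.range k, (-1:ℝ)^i * ((k.choose (i+1) : ℕ):ℝ) * f ((k:ℝ)/2 - 1 - i) := by
    rw [Finset.sum_range_succ]
    simp [Nat.choose_succ_self]
  rw [h1, h0, h2, h3]
  ring

lemma Sf_key (f : ℝ → ℝ) (k : ℕ) :
    Sf (fun t => t ^ 2 * f t) (k + 2) =
      ((k : ℝ) + 2) ^ 2 / 4 * Sf f (k + 2) + ((k : ℝ) + 2) * ((k : ℝ) + 1) * Sf f k := by
  have expand : Sf (fun t => t ^ 2 * f t) (k + 2)
      = ((k:ℝ)+2)^2/4 * Sf f (k+2)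
        - ((k:ℝ)+2) * ∑ j ∈ Finset.range (k+3),
            (j:ℝ) * ((-1:ℝ)^j * (((k+2).choose j : ℕ):ℝ) * f (((k:ℝ)+2)/2 - j))
        + ∑ j ∈ Finset.range (k+3),
            (j:ℝ)^2 * ((-1:ℝ)^j * (((k+2).choose j : ℕ):ℝ) * f (((k:ℝ)+2)/2 - j)) := by
    unfold Sf
    rw [Finset.mul_sum, Finset.mul_sum, ← Finset.sum_sub_distrib, ← Finset.sum_add_distrib]
    refine Finset.sum_congr rfl ?_
    intro j _
    push_cast
    ring
  rw [expand, sumA, sumB, pascalP]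
  ring

lemma Sf_pow (m k : ℕ) : Sf (fun t => t ^ m) k = (k ! : ℝ) * centralT m k := by
  have h : (k ! : ℝ) ≠ 0 := Nat.cast_ne_zero.mpr (Nat.factorial_ne_zero k)
  simp only [centralT, Sf, ← mul_assoc, mul_one_div, div_self h, one_mul]

lemma T_rec (m k : ℕ) :
    centralT (m+2) (k+2) = ((k:ℝ)+2)^2/4 * centralT m (k+2) + centralT m k := by
  have hkey := Sf_key (fun t => t^m) k
  have hfun : (fun t : ℝ => t^2 * t^m) = fun t : ℝ => t^(m+2) := by
    funext t; ring
  rw [hfun, Sf_pow, Sf_pow, Sf_pow] at hkey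
  have hne : (((k+2))! : ℝ) ≠ 0 := Nat.cast_ne_zero.mpr (Nat.factorial_ne_zero _)
  have hfac : (((k+2))! : ℝ) = ((k:ℝ)+2)*((k:ℝ)+1)*(k ! : ℝ) := by
    rw [show k+2 = (k+1)+1 from rfl, Nat.factorial_succ, Nat.factorial_succ]; push_cast; ring
  apply mul_left_cancel₀ hne
  linear_combination hkey - centralT m k * hfac

lemma T_zero_left (m : ℕ) : centralT (m+1) 0 = 0 := by
  simp [centralT]

lemma T_one (m : ℕ) : centralT (m+2) 1 = 1/4 * centralT m 1 := by
  simp only [centralT, Finset.sum_range_succ, Finset.sum_range_zero]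
  norm_num
  ring

lemma alt_zero (K : ℕ) :
    ∑ j ∈ Finset.range (K+2), (-1:ℝ)^j * (((K+1).choose j : ℕ):ℝ) = 0 := by
  have h := add_pow (-1 : ℝ) 1 (K+1)
  simp only [neg_add_cancel, one_pow, mul_one] at h
  rw [zero_pow (Nat.succ_ne_zero K)] at h
  exact h.symm

lemma T_vanish0 (K : ℕ) : centralT 0 (K+1) = 0 := by
  simp only [centralT, pow_zero, mul_one]
  rw [show K+1+1 = K+2 from rfl]
  rw [alt_zero K]
  ring

lemma T_vanish1 (K : ℕ) : centralT 1 (K+2) = 0 := by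
  have h1 : ∑ j ∈ Finset.range (K+3), (-1:ℝ)^j * (((K+2).choose j : ℕ):ℝ) = 0 := by
    have := alt_zero (K+1)
    simpa using this
  have h2 := sumA (fun _ : ℝ => (1:ℝ)) K
  simp only [mul_one] at h2
  have h2' : ∑ j ∈ Finset.range (K+3), (j:ℝ) * ((-1:ℝ)^j * (((K+2).choose j : ℕ):ℝ)) = 0 := by
    rw [h2, show ∑ i ∈ Finset.range (K+2), (-1:ℝ)^i * (((K+1).choose i : ℕ):ℝ) = 0 from alt_zero K]
    ring
  have h3 : ∑ j ∈ Finset.range (K+2+1),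
      (-1:ℝ)^j * (((K+2).choose j : ℕ):ℝ) * (((K+2:ℕ):ℝ)/2 - (j:ℝ))^1 = 0 := by
    have hsplit : ∀ j ∈ Finset.range (K+3),
        (-1:ℝ)^j * (((K+2).choose j : ℕ):ℝ) * (((K+2:ℕ):ℝ)/2 - (j:ℝ))^1
        = ((K:ℝ)+2)/2 * ((-1:ℝ)^j * (((K+2).choose j : ℕ):ℝ))
          - (j:ℝ) * ((-1:ℝ)^j * (((K+2).choose j : ℕ):ℝ)) := by
      intro j _
      push_cast
      ring
    rw [Finset.sum_congr rfl hsplit, Finset.sum_sub_distrib, ← Finset.mul_sum, h1, h2']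
    ring
  unfold centralT
  rw [h3]
  ring

lemma T_vanish : ∀ m k : ℕ, m < k → centralT m k = 0 := by
  intro m
  induction m using Nat.strong_induction_on with
  | _ m ih =>
    match m with
    | 0 =>
      intro k hk
      obtain ⟨K, rfl⟩ : ∃ K, k = K+1 := ⟨k-1, by omega⟩
      exact T_vanish0 K
    | 1 =>
      intro k hk
      obtain ⟨K, rfl⟩ : ∃ K, k = K+2 := ⟨k-2, by omega⟩
      exact T_vanish1 K
    | (m'+2) =>
      intro k hk
      obtain ⟨k', rfl⟩ : ∃ k', k = k'+2 := ⟨k-2, by omega⟩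
      rw [T_rec, ih m' (by omega) k' (by omega), ih m' (by omega) (k'+2) (by omega)]
      ring

lemma deriv_cf (m : ℕ) : deriv (fun y : ℝ => centralFubini m y)
    = fun x : ℝ => ∑ k ∈ Finset.range (m+1),
        ((k ! : ℝ) * centralT m k) * ((k:ℝ) * x^(k-1)) := by
  funext x
  simp only [centralFubini]
  rw [deriv_fun_sum (fun k _ => by fun_prop)]
  refine Finset.sum_congr rfl ?_
  intro k _
  rw [deriv_const_mul_field, deriv_pow_field]

lemma deriv2_cf (m : ℕ) : deriv (deriv (fun y : ℝ => centralFubini m y))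
    = fun x : ℝ => ∑ k ∈ Finset.range (m+1),
        ((k ! : ℝ) * centralT m k) * ((k:ℝ) * (((k:ℝ)-1) * x^(k-2))) := by
  rw [deriv_cf]
  funext x
  have h : (fun x : ℝ => ∑ k ∈ Finset.range (m+1),
        ((k ! : ℝ) * centralT m k) * ((k:ℝ) * x^(k-1)))
      = fun x : ℝ => ∑ k ∈ Finset.range (m+1),
        ((k ! : ℝ) * centralT m k * (k:ℝ)) * x^(k-1) := by
    funext y; exact Finset.sum_congr rfl (fun k _ => by ring)
  rw [h, deriv_fun_sum (fun k _ => by fun_prop)]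
  refine Finset.sum_congr rfl ?_
  intro k _
  rw [deriv_const_mul_field, deriv_pow_field]
  rcases k with _ | _ | k
  · norm_num
  · norm_num
  · push_cast [show k+1+1-1 = k+1 from rfl, show k+1+1-1-1 = k from rfl]
    ring

theorem central_fubini_second_order_recurrence (n : ℕ) (hn : 2 ≤ n) (x : ℝ) :
    centralFubini n x =
      2 * x ^ 2 * centralFubini (n - 2) x +
      (x / 4 + 4 * x ^ 3) * deriv (fun y : ℝ => centralFubini (n - 2) y) x +
      (x ^ 2 / 4 + x ^ 4) * deriv (deriv (fun y : ℝ => centralFubini (n - 2) y)) x := by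
  obtain ⟨m, rfl⟩ : ∃ m, n = m + 2 := ⟨n - 2, by omega⟩
  simp only [Nat.add_sub_cancel]
  rw [deriv2_cf m, deriv_cf m]
  beta_reduce
  -- Right-hand side as a single sum
  have hR : 2 * x ^ 2 * centralFubini m x +
      (x / 4 + 4 * x ^ 3) * (∑ k ∈ Finset.range (m+1),
        ((k ! : ℝ) * centralT m k) * ((k:ℝ) * x^(k-1))) +
      (x ^ 2 / 4 + x ^ 4) * (∑ k ∈ Finset.range (m+1),
        ((k ! : ℝ) * centralT m k) * ((k:ℝ) * (((k:ℝ)-1) * x^(k-2))))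
      = (∑ k ∈ Finset.range (m+1),
          ((k ! : ℝ) * centralT m k) * (((k:ℝ)^2/4) * x^k))
        + ∑ k ∈ Finset.range (m+1),
          ((k ! : ℝ) * centralT m k) * ((((k:ℝ)+1) * ((k:ℝ)+2)) * x^(k+2)) := by
    simp only [centralFubini, Finset.mul_sum, ← Finset.sum_add_distrib]
    refine Finset.sum_congr rfl ?_
    intro k _
    rcases k with _ | _ | k
    · norm_num; ring
    · norm_num; ring
    · push_cast [show k+1+1-1 = k+1 from rfl, show k+1+1-2 = k from rfl]
      ring
  rw [hR]
  -- Left-hand side: peel off the bottom two terms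
  have hL : centralFubini (m+2) x
      = (∑ k ∈ Finset.range (m+1),
          (((k+2))! : ℝ) * centralT (m+2) (k+2) * x^(k+2))
        + centralT (m+2) 1 * x := by
    simp only [centralFubini]
    rw [Finset.sum_range_succ', Finset.sum_range_succ']
    rw [show centralT (m+2) 0 = 0 from T_zero_left (m+1)]
    norm_num
  rw [hL, T_one]
  -- split each coefficient using the recurrence for centralT
  have hsplit : ∀ k ∈ Finset.range (m+1),
      (((k+2))! : ℝ) * centralT (m+2) (k+2) * x^(k+2)
      = (((k:ℝ)+2)^2/4 * ((((k+2))! : ℝ) * centralT m (k+2)) * x^(k+2))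
        + ((k ! : ℝ) * centralT m k) * ((((k:ℝ)+1) * ((k:ℝ)+2)) * x^(k+2)) := by
    intro k _
    have hfac : ((((k+2))!) : ℝ) = ((k:ℝ)+2)*((k:ℝ)+1)*(k ! : ℝ) := by
      rw [show k+2 = (k+1)+1 from rfl, Nat.factorial_succ, Nat.factorial_succ]
      push_cast; ring
    rw [T_rec m k, hfac]
    ring
  rw [Finset.sum_congr rfl hsplit, Finset.sum_add_distrib]
  -- The shifted quadratic sums agree via a common extended sum
  have hV1 : ∑ k ∈ Finset.range (m+3), ((k:ℝ)^2/4) * ((k ! : ℝ) * centralT m k) * x^k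
      = (∑ k ∈ Finset.range (m+1),
          ((k:ℝ)+2)^2/4 * ((((k+2))! : ℝ) * centralT m (k+2)) * x^(k+2))
        + 1/4 * centralT m 1 * x := by
    rw [Finset.sum_range_succ', Finset.sum_range_succ']
    norm_num
    refine Finset.sum_congr rfl ?_
    intro k _
    push_cast
    ring
  have hV2 : ∑ k ∈ Finset.range (m+3), ((k:ℝ)^2/4) * ((k ! : ℝ) * centralT m k) * x^k
      = ∑ k ∈ Finset.range (m+1), ((k ! : ℝ) * centralT m k) * (((k:ℝ)^2/4) * x^k) := by
    rw [show m+3 = (m+1)+1+1 from rfl, Finset.sum_range_succ, Finset.sum_range_succ]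
    rw [T_vanish m (m+1) (by omega), T_vanish m (m+2) (by omega)]
    norm_num
    exact Finset.sum_congr rfl (fun k _ => by ring)
  linear_combination hV2 - hV1
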